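/- For X a standard Laplace random variable and v > 0, E[|X + v| · |X|] = v + v e^{-v} + 2 e^{-v}. -/

import Mathlib

open MeasureTheory Real Set Filter

private lemma hasDerivAt_quad (a b c x : ℝ) :
    HasDerivAt (fun x => (a*x^2+b*x+c)*Real.exp (-x))
      ((-a*x^2+(2*a-b)*x+(b-c))*Real.exp (-x)) x := by
  have h1 : HasDerivAt (fun x : ℝ => a*x^2+b*x+c) (2*a*x+b) x := by
    have := ((hasDerivAt_pow 2 x).const_mul a).add
      (((hasDerivAt_id x).const_mul b).add_const c)
    convert this using 1
    · rfl
    · rfl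
    · funext y; simp only [id_eq, Pi.add_apply]; ring
    · ring
  have h2 : HasDerivAt (fun x : ℝ => Real.exp (-x)) (-Real.exp (-x)) x := by
    simpa using (hasDerivAt_neg x).exp
  convert h1.mul h2 using 1
  · rfl
  · rfl
  · rfl
  ring

private lemma tendsto_quad (a b c : ℝ) :
    Tendsto (fun x => (a*x^2+b*x+c)*Real.exp (-x)) atTop (nhds 0) := by
  have h0 := Real.tendsto_pow_mul_exp_neg_atTop_nhds_zero 0
  have h1 := Real.tendsto_pow_mul_exp_neg_atTop_nhds_zero 1
  have h2 := Real.tendsto_pow_mul_exp_neg_atTop_nhds_zero 2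
  have := ((h2.const_mul a).add (h1.const_mul b)).add (h0.const_mul c)
  simp only [mul_zero, add_zero] at this
  refine this.congr fun x => ?_
  ring

/-- antiderivative of `(a x² + b x + c) e^{-x}` -/
private noncomputable def quadAnti (a b c : ℝ) : ℝ → ℝ :=
  fun x => ((-a)*x^2+(-(b+2*a))*x+(-(c+b+2*a)))*Real.exp (-x)

private lemma hasDerivAt_quadAnti (a b c x : ℝ) :
    HasDerivAt (quadAnti a b c) ((a*x^2+b*x+c)*Real.exp (-x)) x := by
  have := hasDerivAt_quad (-a) (-(b+2*a)) (-(c+b+2*a)) x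
  convert this using 1
  · rfl
  ring

private lemma quad_integrableOn (a b c t : ℝ)
    (hnn : ∀ x ∈ Set.Ioi t, 0 ≤ a*x^2+b*x+c) :
    IntegrableOn (fun x => (a*x^2+b*x+c)*Real.exp (-x)) (Set.Ioi t) :=
  integrableOn_Ioi_deriv_of_nonneg' (fun x _ => hasDerivAt_quadAnti a b c x)
    (fun x hx => mul_nonneg (hnn x hx) (Real.exp_nonneg _))
    (tendsto_quad (-a) (-(b+2*a)) (-(c+b+2*a)))

private lemma quad_integral (a b c t : ℝ)
    (hnn : ∀ x ∈ Set.Ioi t, 0 ≤ a*x^2+b*x+c) :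
    ∫ x in Set.Ioi t, (a*x^2+b*x+c)*Real.exp (-x)
      = (a*t^2+(b+2*a)*t+(c+b+2*a))*Real.exp (-t) := by
  have := integral_Ioi_of_hasDerivAt_of_nonneg' (fun x _ => hasDerivAt_quadAnti a b c x)
    (fun x hx => mul_nonneg (hnn x hx) (Real.exp_nonneg _))
    (tendsto_quad (-a) (-(b+2*a)) (-(c+b+2*a)))
  rw [this]
  unfold quadAnti
  ring

/-- For X standard Laplace and v > 0, E[|X+v|·|X|] = v + v e^{-v} + 2 e^{-v}. -/
theorem laplace_abs_prod (v : ℝ) (hv : 0 < v) :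
    ∫ x : ℝ, |x + v| * |x| * (1 / 2 * Real.exp (-|x|))
      = v + v * Real.exp (-v) + 2 * Real.exp (-v) := by
  set f : ℝ → ℝ := fun x => |x + v| * |x| * (1 / 2 * Real.exp (-|x|)) with hf
  have hfc : Continuous f := by
    apply Continuous.mul
    · exact ((continuous_id.add continuous_const).abs).mul continuous_abs
    · exact continuous_const.mul (continuous_abs.neg.rexp)
  -- positive part
  have hE1 : EqOn (fun x => (1/2*x^2+(v/2)*x+0)*Real.exp (-x)) f (Set.Ioi 0) := by
    intro x hx
    have hx0 : (0:ℝ) < x := hx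
    simp only [hf, abs_of_pos hx0, abs_of_pos (by linarith : (0:ℝ) < x + v)]
    ring
  have hnn1 : ∀ x ∈ Set.Ioi (0:ℝ), 0 ≤ 1/2*x^2+(v/2)*x+0 := by
    intro x hx
    have hx0 : (0:ℝ) < x := hx
    nlinarith
  have hI1 : IntegrableOn f (Set.Ioi 0) :=
    (quad_integrableOn (1/2) (v/2) 0 0 hnn1).congr_fun hE1 measurableSet_Ioi
  have hV1 : ∫ x in Set.Ioi (0:ℝ), f x = v/2 + 1 := by
    rw [← setIntegral_congr_fun measurableSet_Ioi hE1, quad_integral _ _ _ _ hnn1]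
    norm_num
  -- negative part via x ↦ -x
  set g : ℝ → ℝ := fun x => f (-x) with hg
  have hgc : Continuous g := hfc.comp continuous_neg
  have hE2b : EqOn (fun x => (1/2*x^2+(-v/2)*x+0)*Real.exp (-x)) g (Set.Ioi v) := by
    intro x hx
    have hxv : v < x := hx
    have hx0 : (0:ℝ) < x := lt_trans hv hxv
    simp only [hg, hf, abs_neg, abs_of_pos hx0]
    rw [show -x + v = -(x - v) by ring, abs_neg, abs_of_pos (by linarith : (0:ℝ) < x - v)]
    ring
  have hnn2 : ∀ x ∈ Set.Ioi v, 0 ≤ 1/2*x^2+(-v/2)*x+0 := by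
    intro x hx
    have hxv : v < x := hx
    nlinarith
  have hI2b : IntegrableOn g (Set.Ioi v) :=
    (quad_integrableOn (1/2) (-v/2) 0 v hnn2).congr_fun hE2b measurableSet_Ioi
  have hI2a : IntegrableOn g (Set.Ioc 0 v) := hgc.integrableOn_Ioc
  have hI2 : IntegrableOn g (Set.Ioi 0) := by
    rw [← Set.Ioc_union_Ioi_eq_Ioi hv.le]
    exact hI2a.union hI2b
  -- value on Ioc 0 v
  have hE2a : EqOn g (fun x => (-(1/2)*x^2+(v/2)*x+0)*Real.exp (-x)) (Set.Ioc 0 v) := by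
    intro x hx
    have hx0 : (0:ℝ) < x := hx.1
    have hxv : x ≤ v := hx.2
    simp only [hg, hf, abs_neg, abs_of_pos hx0]
    rw [show -x + v = v - x by ring, abs_of_nonneg (by linarith : (0:ℝ) ≤ v - x)]
    ring
  have hV2a : ∫ x in Set.Ioc (0:ℝ) v, g x
      = (v/2+1)*Real.exp (-v) - (1 - v/2) := by
    rw [setIntegral_congr_fun measurableSet_Ioc hE2a,
      ← intervalIntegral.integral_of_le hv.le,
      intervalIntegral.integral_eq_sub_of_hasDerivAt
        (f := quadAnti (-(1/2)) (v/2) 0)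
        (fun x _ => hasDerivAt_quadAnti (-(1/2)) (v/2) 0 x)
        (by apply Continuous.intervalIntegrable; continuity)]
    unfold quadAnti
    simp [Real.exp_zero]
    ring
  have hV2b : ∫ x in Set.Ioi v, g x = (v/2+1)*Real.exp (-v) := by
    rw [← setIntegral_congr_fun measurableSet_Ioi hE2b, quad_integral _ _ _ _ hnn2]
    ring
  have hV2 : ∫ x in Set.Ioi (0:ℝ), g x = v/2 - 1 + (v+2)*Real.exp (-v) := by
    rw [← Set.Ioc_union_Ioi_eq_Ioi hv.le,
      setIntegral_union (Set.Ioc_disjoint_Ioi le_rfl) measurableSet_Ioi hI2a hI2b,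
      hV2a, hV2b]
    ring
  -- transfer to Iic 0
  have A : MeasurableEmbedding (fun x : ℝ => -x) :=
    (Homeomorph.neg ℝ).isClosedEmbedding.measurableEmbedding
  have hIic : IntegrableOn f (Set.Iic 0) := by
    have hpre : (fun x : ℝ => -x) ⁻¹' (Set.Iic 0) = Set.Ici 0 := by
      ext x; simp
    have hmap : volume.restrict (Set.Iic (0:ℝ))
        = Measure.map (fun x : ℝ => -x) (volume.restrict (Set.Ici (0:ℝ))) := by
      rw [← hpre, ← Measure.restrict_map A.measurable measurableSet_Iic,
        Measure.map_neg_eq_self]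
    rw [IntegrableOn, hmap, A.integrable_map_iff]
    exact (integrableOn_Ici_iff_integrableOn_Ioi).2 hI2
  have hIicV : ∫ x in Set.Iic (0:ℝ), f x = ∫ x in Set.Ioi (0:ℝ), g x := by
    have := integral_comp_neg_Iic (0:ℝ) g
    simp only [hg, neg_neg, neg_zero] at this
    exact this
  rw [← intervalIntegral.integral_Iic_add_Ioi hIic hI1, hIicV, hV2, hV1]
  ring
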